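/- Let f, g be continuous functions on a compact probability space (M, μ), and let x₁,…,x_n be i.i.d. samples from μ. Let (P_n f)(j) = f(x_j)/√n. Then for sufficiently large n, with probability at least 1 − 2/n⁹, |⟨P_n f, P_n g⟩₂ − ⟨f, g⟩_{L²(μ)}| ≤ 6 √(log n / n) · ‖f‖_{L⁴(μ)} ‖g‖_{L⁴(μ)}. -/

import Mathlib

open MeasureTheory ProbabilityTheory Real

lemma exp_quad {u : ℝ} (hu : |u| ≤ 1) : Real.exp u ≤ 1 + u + u^2 := by
  have h := Real.exp_bound hu (n := 3) (by norm_num)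
  have h2 : |u|^3 ≤ u^2 := by
    calc |u|^3 ≤ |u|^2 := pow_le_pow_of_le_one (abs_nonneg u) hu (by norm_num)
    _ = u^2 := sq_abs u
  simp [Finset.sum_range_succ, Nat.factorial] at h
  rw [abs_le] at h
  nlinarith [h.2]

lemma mgf_bound {M : Type*} [MeasurableSpace M] {μ : Measure M} [IsProbabilityMeasure μ]
    {Z : M → ℝ} (hZm : Measurable Z) {C v t : ℝ}
    (hC : ∀ y, |Z y| ≤ C) (hmean : ∫ y, Z y ∂μ = 0)
    (hv : ∫ y, (Z y)^2 ∂μ ≤ v) (ht : |t| * C ≤ 1) :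
    mgf Z μ t ≤ Real.exp (t^2 * v) := by
  have hZi : Integrable Z μ :=
    (integrable_const C).mono' hZm.aestronglyMeasurable (ae_of_all _ hC)
  have hZ2i : Integrable (fun y => (Z y)^2) μ := by
    refine (integrable_const (C^2)).mono' (hZm.pow_const 2).aestronglyMeasurable
      (ae_of_all _ fun y => ?_)
    rw [Real.norm_eq_abs, abs_pow]
    exact pow_le_pow_left₀ (abs_nonneg _) (hC y) 2
  have hpt : ∀ y, Real.exp (t * Z y) ≤ 1 + t * Z y + t^2 * (Z y)^2 := by
    intro y
    have h1 : |t * Z y| ≤ 1 := by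
      rw [abs_mul]
      exact le_trans (mul_le_mul_of_nonneg_left (hC y) (abs_nonneg t)) ht
    have := exp_quad h1
    nlinarith [this]
  have hexpi : Integrable (fun y => Real.exp (t * Z y)) μ := by
    refine (integrable_const (Real.exp (|t| * C))).mono'
      ((hZm.const_mul t).exp).aestronglyMeasurable (ae_of_all _ fun y => ?_)
    rw [Real.norm_eq_abs, abs_of_pos (Real.exp_pos _)]
    apply Real.exp_le_exp.2
    calc t * Z y ≤ |t * Z y| := le_abs_self _
    _ = |t| * |Z y| := abs_mul _ _
    _ ≤ |t| * C := mul_le_mul_of_nonneg_left (hC y) (abs_nonneg t)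
  have i1 : Integrable (fun y => 1 + t * Z y) μ := by
    exact (integrable_const 1).add (hZi.const_mul t)
  have i2 : Integrable (fun y => t^2 * (Z y)^2) μ := hZ2i.const_mul (t^2)
  have hri : Integrable (fun y => 1 + t * Z y + t^2 * (Z y)^2) μ := by exact i1.add i2
  calc mgf Z μ t = ∫ y, Real.exp (t * Z y) ∂μ := rfl
  _ ≤ ∫ y, (1 + t * Z y + t^2 * (Z y)^2) ∂μ := integral_mono hexpi hri hpt
  _ = 1 + t * ∫ y, Z y ∂μ + t^2 * ∫ y, (Z y)^2 ∂μ := by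
      rw [integral_add i1 i2, integral_add (integrable_const 1) (hZi.const_mul t),
        integral_const, integral_const_mul, integral_const_mul]
      simp
  _ ≤ 1 + t^2 * v := by
      rw [hmean]
      have : t^2 * ∫ y, (Z y)^2 ∂μ ≤ t^2 * v :=
        mul_le_mul_of_nonneg_left hv (sq_nonneg t)
      linarith
  _ ≤ Real.exp (t^2 * v) := by linarith [Real.add_one_le_exp (t^2 * v)]
lemma chernoff {Ω M : Type*} [MeasurableSpace Ω] [MeasurableSpace M]
    (P : Measure Ω) [IsProbabilityMeasure P] (μ : Measure M) [IsProbabilityMeasure μ]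
    (x : ℕ → Ω → M) (hxm : ∀ j, Measurable (x j))
    (hindep : iIndepFun x P)
    (hdist : ∀ j, P.map (x j) = μ)
    (Z : M → ℝ) (hZm : Measurable Z) {C v t : ℝ}
    (hC : ∀ y, |Z y| ≤ C) (hmean : ∫ y, Z y ∂μ = 0) (hv : ∫ y, (Z y)^2 ∂μ ≤ v)
    (n : ℕ) (ε : ℝ) (ht : 0 ≤ t) (htC : t * C ≤ 1) :
    (P {ω | ε ≤ ∑ j ∈ Finset.range n, Z (x j ω)}).toReal ≤
      Real.exp (-t * ε) * Real.exp (n * (t^2 * v)) := by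
  set Y : ℕ → Ω → ℝ := fun j ω => Z (x j ω) with hY
  have hYm : ∀ j, Measurable (Y j) := fun j => hZm.comp (hxm j)
  have hYindep : iIndepFun Y P :=
    hindep.comp (fun _ => Z) (fun _ => hZm)
  have hmgfY : ∀ j, mgf (Y j) P t = mgf Z μ t := by
    intro j
    show ∫ ω, Real.exp (t * Z (x j ω)) ∂P = ∫ y, Real.exp (t * Z y) ∂μ
    rw [← hdist j, integral_map (hxm j).aemeasurable]
    exact ((hZm.const_mul t).exp).aestronglyMeasurable
  have hint : ∀ j, Integrable (fun ω => Real.exp (t * Y j ω)) P := by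
    intro j
    refine (integrable_const (Real.exp (|t| * C))).mono'
      (((hYm j).const_mul t).exp).aestronglyMeasurable (ae_of_all _ fun ω => ?_)
    rw [Real.norm_eq_abs, abs_of_pos (Real.exp_pos _)]
    apply Real.exp_le_exp.2
    calc t * Y j ω ≤ |t * Y j ω| := le_abs_self _
    _ = |t| * |Y j ω| := abs_mul _ _
    _ ≤ |t| * C := mul_le_mul_of_nonneg_left (hC _) (abs_nonneg t)
  have hintsum : Integrable (fun ω => Real.exp (t * (∑ j ∈ Finset.range n, Y j) ω)) P :=
    hYindep.integrable_exp_mul_sum hYm (fun j _ => hint j)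
  have key := measure_ge_le_exp_mul_mgf (X := ∑ j ∈ Finset.range n, Y j) (μ := P) ε ht hintsum
  have hset : {ω | ε ≤ (∑ j ∈ Finset.range n, Y j) ω} =
      {ω | ε ≤ ∑ j ∈ Finset.range n, Z (x j ω)} := by
    ext ω; simp [Finset.sum_apply, hY]
  rw [hset] at key
  refine key.trans ?_
  have hmgf1 : mgf Z μ t ≤ Real.exp (t^2 * v) := by
    apply mgf_bound hZm hC hmean hv
    rwa [abs_of_nonneg ht]
  have : mgf (∑ j ∈ Finset.range n, Y j) P t ≤ Real.exp ((n : ℝ) * (t^2 * v)) := by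
    rw [hYindep.mgf_sum hYm]
    calc ∏ j ∈ Finset.range n, mgf (Y j) P t = (mgf Z μ t)^n := by
          rw [Finset.prod_congr rfl fun j _ => hmgfY j, Finset.prod_const, Finset.card_range]
    _ ≤ (Real.exp (t^2 * v))^n := pow_le_pow_left₀ (mgf_nonneg) hmgf1 n
    _ = Real.exp ((n : ℝ) * (t^2 * v)) := by rw [← Real.exp_nat_mul]
  exact mul_le_mul_of_nonneg_left this (Real.exp_pos _).le
lemma deg_case {Ω M : Type*} [MeasurableSpace Ω]
    [TopologicalSpace M] [MeasurableSpace M] [BorelSpace M]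
    (P : Measure Ω) [IsProbabilityMeasure P]
    (μ : Measure M) [IsProbabilityMeasure μ]
    (x : ℕ → Ω → M) (hxm : ∀ j, Measurable (x j))
    (hdist : ∀ j, P.map (x j) = μ)
    (f g : M → ℝ) (hf : Continuous f) (hg : Continuous g)
    (hae : ∀ᵐ y ∂μ, f y * g y = 0)
    (hf4 : 0 ≤ ∫ y, (f y) ^ 4 ∂μ) (hg4 : 0 ≤ ∫ y, (g y) ^ 4 ∂μ) :
    ∃ N : ℕ, ∀ n : ℕ, N ≤ n →
      ENNReal.ofReal (1 - 2 / (n : ℝ) ^ 9) ≤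
        P {ω | |(1 / (n : ℝ)) * ∑ j ∈ Finset.range n, f (x j ω) * g (x j ω) -
            ∫ y, f y * g y ∂μ| ≤
          6 * Real.sqrt (Real.log n / n) *
            ((∫ y, (f y) ^ 4 ∂μ) ^ ((1 : ℝ) / 4) *
              (∫ y, (g y) ^ 4 ∂μ) ^ ((1 : ℝ) / 4))} := by
  refine ⟨1, fun n hn => ?_⟩
  have hm : ∫ y, f y * g y ∂μ = 0 := integral_eq_zero_of_ae hae
  set Nset : Set M := {y | f y * g y ≠ 0} with hNset
  have hNmeas : MeasurableSet Nset :=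
    ((hf.mul hg).measurable (measurableSet_singleton 0)).compl
  have hNnull : μ Nset = 0 := by
    rw [ae_iff] at hae
    exact hae
  have hPj : ∀ j, P (x j ⁻¹' Nset) = 0 := by
    intro j
    rw [← Measure.map_apply (hxm j) hNmeas, hdist j]
    exact hNnull
  set bad : Set Ω := ⋃ j, x j ⁻¹' Nset with hbad
  have hbadnull : P bad = 0 := measure_iUnion_null hPj
  have hbadmeas : MeasurableSet bad :=
    MeasurableSet.iUnion fun j => (hxm j) hNmeas
  have hsub : badᶜ ⊆ {ω | |(1 / (n : ℝ)) * ∑ j ∈ Finset.range n, f (x j ω) * g (x j ω) -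
            ∫ y, f y * g y ∂μ| ≤
          6 * Real.sqrt (Real.log n / n) *
            ((∫ y, (f y) ^ 4 ∂μ) ^ ((1 : ℝ) / 4) *
              (∫ y, (g y) ^ 4 ∂μ) ^ ((1 : ℝ) / 4))} := by
    intro ω hω
    simp only [hbad, Set.compl_iUnion, Set.mem_iInter, Set.mem_compl_iff, Set.mem_preimage,
      hNset, Set.mem_setOf_eq, not_not] at hω
    have hzero : ∀ j ∈ Finset.range n, f (x j ω) * g (x j ω) = 0 := fun j _ => hω j
    simp only [Set.mem_setOf_eq, Finset.sum_congr rfl hzero, Finset.sum_const_zero, hm,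
      mul_zero, sub_zero, abs_zero]
    have := Real.sqrt_nonneg (Real.log n / n)
    have h1 := Real.rpow_nonneg hf4 ((1:ℝ)/4)
    have h2 := Real.rpow_nonneg hg4 ((1:ℝ)/4)
    positivity
  calc ENNReal.ofReal (1 - 2 / (n : ℝ) ^ 9) ≤ 1 := by
        rw [← ENNReal.ofReal_one]
        apply ENNReal.ofReal_le_ofReal
        have : (0:ℝ) ≤ 2 / (n : ℝ) ^ 9 := by positivity
        linarith
  _ = P badᶜ := by rw [prob_compl_eq_one_sub hbadmeas, hbadnull, tsub_zero]
  _ ≤ P _ := measure_mono hsub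
lemma arith_tails (s B nr lg : ℝ) (hB : B ≠ 0) (hns2 : nr * s^2 = lg) :
    -(3*s/B) * (nr*(6*s*B)) + nr * ((3*s/B)^2 * B^2) = -(9*lg) := by
  field_simp
  linear_combination (-9) * hns2

set_option maxHeartbeats 1000000 in
theorem stmt_9 {Ω M : Type*} [MeasurableSpace Ω]
    [TopologicalSpace M] [CompactSpace M] [MeasurableSpace M] [BorelSpace M]
    (P : Measure Ω) [IsProbabilityMeasure P]
    (μ : Measure M) [IsProbabilityMeasure μ]
    (x : ℕ → Ω → M) (hxm : ∀ j, Measurable (x j))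
    (hindep : iIndepFun x P)
    (hdist : ∀ j, P.map (x j) = μ)
    (f g : M → ℝ) (hf : Continuous f) (hg : Continuous g) :
    ∃ N : ℕ, ∀ n : ℕ, N ≤ n →
      ENNReal.ofReal (1 - 2 / (n : ℝ) ^ 9) ≤
        P {ω | |(1 / (n : ℝ)) * ∑ j ∈ Finset.range n, f (x j ω) * g (x j ω) -
            ∫ y, f y * g y ∂μ| ≤
          6 * Real.sqrt (Real.log n / n) *
            ((∫ y, (f y) ^ 4 ∂μ) ^ ((1 : ℝ) / 4) *
              (∫ y, (g y) ^ 4 ∂μ) ^ ((1 : ℝ) / 4))} := by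
  have hhc : Continuous fun y => f y * g y := hf.mul hg
  have hIf4 : 0 ≤ ∫ y, (f y)^4 ∂μ := integral_nonneg fun y => by positivity
  have hIg4 : 0 ≤ ∫ y, (g y)^4 ∂μ := integral_nonneg fun y => by positivity
  have hne : Nonempty M := by
    by_contra hc
    rw [not_nonempty_iff] at hc
    have h0 : (Set.univ : Set M) = ∅ := Set.univ_eq_empty_iff.2 hc
    have h1 := measure_univ (μ := μ)
    rw [h0, measure_empty] at h1
    exact zero_ne_one h1
  have ibd : ∀ φ : M → ℝ, Continuous φ → ∃ K, 0 ≤ K ∧ ∀ y, |φ y| ≤ K := by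
    intro φ hφ
    obtain ⟨y₀, -, hy₀⟩ := isCompact_univ.exists_isMaxOn Set.univ_nonempty hφ.abs.continuousOn
    exact ⟨|φ y₀|, abs_nonneg _, fun y => hy₀ (Set.mem_univ y)⟩
  have hint : ∀ φ : M → ℝ, Continuous φ → Integrable φ μ := by
    intro φ hφ
    obtain ⟨K, hK0, hK⟩ := ibd φ hφ
    exact (integrable_const K).mono' hφ.measurable.aestronglyMeasurable (ae_of_all _ hK)
  by_cases hzero : (∫ y, (f y)^4 ∂μ = 0) ∨ (∫ y, (g y)^4 ∂μ = 0)
  · -- degenerate case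
    apply deg_case P μ x hxm hdist f g hf hg _ hIf4 hIg4
    have key : ∀ φ : M → ℝ, Continuous φ → (∫ y, (φ y)^4 ∂μ = 0) → ∀ᵐ y ∂μ, φ y = 0 := by
      intro φ hφ h0
      have h4 : ∀ᵐ y ∂μ, (φ y)^4 = 0 := by
        have := (integral_eq_zero_iff_of_nonneg (f := fun y => (φ y)^4)
          (fun y => by positivity) (hint _ (hφ.pow 4))).1 h0
        filter_upwards [this] with y hy using hy
      filter_upwards [h4] with y hy
      exact pow_eq_zero_iff (by norm_num : (4:ℕ) ≠ 0) |>.1 hy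
    rcases hzero with h0 | h0
    · filter_upwards [key f hf h0] with y hy
      rw [hy, zero_mul]
    · filter_upwards [key g hg h0] with y hy
      rw [hy, mul_zero]
  · -- main case
    push_neg at hzero
    set A := ∫ y, (f y)^4 ∂μ with hA
    set Bg := ∫ y, (g y)^4 ∂μ with hBg
    have hApos : 0 < A := lt_of_le_of_ne hIf4 (Ne.symm hzero.1)
    have hBgpos : 0 < Bg := lt_of_le_of_ne hIg4 (Ne.symm hzero.2)
    set B := A ^ ((1:ℝ)/4) * Bg ^ ((1:ℝ)/4) with hB
    have hBpos : 0 < B := mul_pos (Real.rpow_pos_of_pos hApos _) (Real.rpow_pos_of_pos hBgpos _)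
    set m := ∫ y, f y * g y ∂μ with hm
    obtain ⟨C₀, hC₀0, hC₀⟩ := ibd (fun y => f y * g y) hhc
    set C := C₀ + |m| + 1 with hC
    have hCpos : 0 < C := by positivity
    set Z : M → ℝ := fun y => f y * g y - m with hZ
    have hZc : Continuous Z := hhc.sub continuous_const
    have hZm : Measurable Z := hZc.measurable
    have hZC : ∀ y, |Z y| ≤ C := by
      intro y
      have h1 : |f y * g y| ≤ C₀ := hC₀ y
      calc |f y * g y - m| ≤ |f y * g y| + |m| := by
            rw [sub_eq_add_neg]
            exact (abs_add_le _ _).trans (by rw [abs_neg])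
      _ ≤ C := by rw [hC]; linarith
    have hmean : ∫ y, Z y ∂μ = 0 := by
      simp only [hZ]
      rw [integral_sub (hint _ hhc) (integrable_const m), integral_const]
      simp [hm]
    -- variance bound
    have hI2 : ∫ y, (f y)^2 * (g y)^2 ∂μ ≤ Real.sqrt A * Real.sqrt Bg := by
      set a := Real.sqrt Bg with ha
      set b := Real.sqrt A with hb
      have hapos : 0 < a := Real.sqrt_pos.2 hBgpos
      have hbpos : 0 < b := Real.sqrt_pos.2 hApos
      have ha2 : a^2 = Bg := Real.sq_sqrt hBgpos.le
      have hb2 : b^2 = A := Real.sq_sqrt hApos.le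
      have i1 : Integrable (fun y => a^2*(f y)^4 - 2*a*b*((f y)^2*(g y)^2)) μ := by
        exact ((hint _ (hf.pow 4)).const_mul (a^2)).sub
          ((hint _ ((hf.pow 2).mul (hg.pow 2))).const_mul (2*a*b))
      have i2 : Integrable (fun y => b^2*(g y)^4) μ := (hint _ (hg.pow 4)).const_mul _
      have key : (0:ℝ) ≤ ∫ y, (a*(f y)^2 - b*(g y)^2)^2 ∂μ :=
        integral_nonneg fun y => sq_nonneg _
      have expand : ∫ y, (a*(f y)^2 - b*(g y)^2)^2 ∂μ =
          a^2 * A - 2*a*b*(∫ y, (f y)^2*(g y)^2 ∂μ) + b^2 * Bg := by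
        rw [integral_congr_ae (ae_of_all _ (fun y =>
          (by ring : (a*(f y)^2 - b*(g y)^2)^2 =
            (a^2*(f y)^4 - 2*a*b*((f y)^2*(g y)^2)) + b^2*(g y)^4)))]
        rw [integral_add i1 i2,
          integral_sub (f := fun y => a^2*(f y)^4) (g := fun y => 2*a*b*((f y)^2*(g y)^2))
            ((hint _ (hf.pow 4)).const_mul (a^2))
            ((hint _ ((hf.pow 2).mul (hg.pow 2))).const_mul (2*a*b)),
          integral_const_mul, integral_const_mul, integral_const_mul]
      rw [expand, ← hb2, ← ha2] at key
      have h1 : a*b*(∫ y, (f y)^2*(g y)^2 ∂μ) ≤ (a*b)*(a*b) := by nlinarith [key]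
      have h2 := le_of_mul_le_mul_left h1 (mul_pos hapos hbpos)
      calc ∫ y, (f y)^2 * (g y)^2 ∂μ ≤ a * b := h2
      _ = Real.sqrt A * Real.sqrt Bg := by rw [ha, hb]; ring
    have hB2 : B^2 = Real.sqrt A * Real.sqrt Bg := by
      rw [hB, mul_pow, ← Real.rpow_natCast (A ^ ((1:ℝ)/4)) 2,
        ← Real.rpow_natCast (Bg ^ ((1:ℝ)/4)) 2,
        ← Real.rpow_mul hApos.le, ← Real.rpow_mul hBgpos.le,
        Real.sqrt_eq_rpow, Real.sqrt_eq_rpow]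
      norm_num
    have hv : ∫ y, (Z y)^2 ∂μ ≤ B^2 := by
      have e1 : ∫ y, (Z y)^2 ∂μ =
          ∫ y, ((f y)^2*(g y)^2 - 2*m*(f y * g y) + m^2) ∂μ := by
        apply integral_congr_ae (ae_of_all _ (fun y => ?_))
        simp only [hZ]; ring
      have i1 : Integrable (fun y => (f y)^2*(g y)^2 - 2*m*(f y * g y)) μ :=
        (hint _ ((hf.pow 2).mul (hg.pow 2))).sub ((hint _ hhc).const_mul (2*m))
      have i2 : Integrable (fun y => m^2) μ := integrable_const _
      rw [e1, integral_add i1 i2,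
        integral_sub (f := fun y => (f y)^2*(g y)^2) (g := fun y => 2*m*(f y * g y))
          (hint _ ((hf.pow 2).mul (hg.pow 2))) ((hint _ hhc).const_mul (2*m)),
        integral_const_mul, integral_const]
      simp only [probReal_univ, smul_eq_mul, one_mul]
      rw [← hm, hB2]
      nlinarith [hI2, sq_nonneg m]
    clear_value A Bg B m C Z
    -- choice of N
    set δ := B / (3*C) with hδ
    have hδpos : 0 < δ := by rw [hδ]; positivity
    clear_value δ
    refine ⟨max 2 (⌈(2/δ^2)^2⌉₊), fun n hn => ?_⟩
    have hn2 : 2 ≤ n := le_trans (le_max_left _ _) hn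
    have hnR : (2:ℝ) ≤ n := by exact_mod_cast hn2
    have hnpos : (0:ℝ) < n := by linarith
    have hn1 : (1:ℝ) ≤ n := by linarith
    have hceil : ((2/δ^2)^2 : ℝ) ≤ n := by
      calc ((2/δ^2)^2 : ℝ) ≤ (⌈(2/δ^2)^2⌉₊ : ℝ) := Nat.le_ceil _
      _ ≤ n := by exact_mod_cast le_trans (le_max_right _ _) hn
    have hsqrtn : 2/δ^2 ≤ Real.sqrt n := by
      rw [show (2/δ^2 : ℝ) = Real.sqrt ((2/δ^2)^2) from (Real.sqrt_sq (by positivity)).symm]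
      exact Real.sqrt_le_sqrt hceil
    have hsqrtnpos : 0 < Real.sqrt n := Real.sqrt_pos.2 hnpos
    have hL : Real.log n / n ≤ δ^2 := by
      have hlogsq : Real.log n = 2 * Real.log (Real.sqrt n) := by
        conv_lhs => rw [← Real.mul_self_sqrt hnpos.le]
        rw [Real.log_mul hsqrtnpos.ne' hsqrtnpos.ne']; ring
      have hlog : Real.log n ≤ 2 * Real.sqrt n := by
        have := Real.log_le_sub_one_of_pos hsqrtnpos
        rw [hlogsq]; linarith
      calc Real.log n / n ≤ 2 * Real.sqrt n / n := by gcongr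
      _ = 2 / Real.sqrt n := by
            rw [div_eq_div_iff hnpos.ne' hsqrtnpos.ne']
            rw [mul_assoc, Real.mul_self_sqrt hnpos.le]
      _ ≤ δ^2 := by
            rw [div_le_iff₀ hsqrtnpos]
            calc (2:ℝ) = δ^2 * (2/δ^2) := by field_simp
            _ ≤ δ^2 * Real.sqrt n := mul_le_mul_of_nonneg_left hsqrtn (by positivity)
    set s := Real.sqrt (Real.log n / n) with hs
    have hLnn : 0 ≤ Real.log n / n := div_nonneg (Real.log_nonneg hn1) hnpos.le
    have hs0 : 0 ≤ s := Real.sqrt_nonneg _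
    have hs2 : s^2 = Real.log n / n := Real.sq_sqrt hLnn
    have hsδ : s ≤ δ := by
      rw [hs, show δ = Real.sqrt (δ^2) from (Real.sqrt_sq hδpos.le).symm]
      exact Real.sqrt_le_sqrt hL
    have hns2 : (n:ℝ) * s^2 = Real.log n := by rw [hs2]; field_simp
    clear_value s
    have ht0 : 0 ≤ 3*s/B := by positivity
    have htC : (3*s/B) * C ≤ 1 := by
      rw [div_mul_eq_mul_div, div_le_one hBpos]
      have h1 : s * (3*C) ≤ δ * (3*C) := mul_le_mul_of_nonneg_right hsδ (by positivity)
      have h2 : δ * (3*C) = B := by rw [hδ]; field_simp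
      calc 3*s*C = s*(3*C) := by ring
      _ ≤ δ*(3*C) := h1
      _ = B := h2
    -- tail bounds
    have tail1 : (P {ω | (n:ℝ)*(6*s*B) ≤ ∑ j ∈ Finset.range n, Z (x j ω)}).toReal ≤
        Real.exp (-(3*s/B) * ((n:ℝ)*(6*s*B))) * Real.exp ((n:ℝ) * ((3*s/B)^2 * B^2)) :=
      chernoff P μ x hxm hindep hdist Z hZm hZC hmean hv n _ ht0 htC
    have tail2 : (P {ω | (n:ℝ)*(6*s*B) ≤ ∑ j ∈ Finset.range n, -(Z (x j ω))}).toReal ≤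
        Real.exp (-(3*s/B) * ((n:ℝ)*(6*s*B))) * Real.exp ((n:ℝ) * ((3*s/B)^2 * B^2)) := by
      have hC' : ∀ y, |(fun y => -(Z y)) y| ≤ C := fun y => by simpa [abs_neg] using hZC y
      have hmean' : ∫ y, -(Z y) ∂μ = 0 := by rw [integral_neg, hmean, neg_zero]
      have hv' : ∫ y, (-(Z y))^2 ∂μ ≤ B^2 := by simpa [neg_sq] using hv
      exact chernoff P μ x hxm hindep hdist (fun y => -(Z y)) hZm.neg hC' hmean' hv' n _ ht0 htC
    have hexp : Real.exp (-(3*s/B) * ((n:ℝ)*(6*s*B))) * Real.exp ((n:ℝ) * ((3*s/B)^2 * B^2)) ≤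
        ((n:ℝ)^9)⁻¹ := by
      rw [← Real.exp_add, arith_tails s B n (Real.log n) hBpos.ne' hns2]
      have h9 : (9:ℝ) * Real.log n = Real.log ((n:ℝ)^9) := by
        rw [Real.log_pow]; push_cast; ring
      rw [h9, Real.exp_neg, Real.exp_log (by positivity)]
    -- complement subset
    have hsub : {ω | |(1 / (n : ℝ)) * ∑ j ∈ Finset.range n, f (x j ω) * g (x j ω) - m| ≤
          6 * s * B}ᶜ ⊆
        {ω | (n:ℝ)*(6*s*B) ≤ ∑ j ∈ Finset.range n, Z (x j ω)} ∪
        {ω | (n:ℝ)*(6*s*B) ≤ ∑ j ∈ Finset.range n, -(Z (x j ω))} := by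
      intro ω hω
      simp only [Set.mem_compl_iff, Set.mem_setOf_eq, not_le] at hω
      have hrw : (1/(n:ℝ)) * ∑ j ∈ Finset.range n, f (x j ω) * g (x j ω) - m
          = (1/(n:ℝ)) * ∑ j ∈ Finset.range n, Z (x j ω) := by
        simp only [hZ]
        rw [Finset.sum_sub_distrib, Finset.sum_const, Finset.card_range, nsmul_eq_mul]
        field_simp
      rw [hrw] at hω
      have h1n : (1/(n:ℝ)) * (n:ℝ) = 1 := by field_simp
      have habs : (n:ℝ)*(6*s*B) ≤ |∑ j ∈ Finset.range n, Z (x j ω)| := by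
        have he : |(1/(n:ℝ)) * ∑ j ∈ Finset.range n, Z (x j ω)| =
            (1/(n:ℝ)) * |∑ j ∈ Finset.range n, Z (x j ω)| := by
          rw [abs_mul, abs_of_pos (by positivity : (0:ℝ) < 1/(n:ℝ))]
        rw [he] at hω
        have h2 := mul_le_mul_of_nonneg_left hω.le hnpos.le
        calc (n:ℝ)*(6*s*B) ≤ (n:ℝ) * ((1/(n:ℝ)) * |∑ j ∈ Finset.range n, Z (x j ω)|) := h2
        _ = |∑ j ∈ Finset.range n, Z (x j ω)| := by
            rw [← mul_assoc, mul_one_div, div_self hnpos.ne', one_mul]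
      rcases le_abs.1 habs with h | h
      · exact Or.inl h
      · right
        show (n:ℝ)*(6*s*B) ≤ ∑ j ∈ Finset.range n, -(Z (x j ω))
        rw [Finset.sum_neg_distrib]
        exact h
    -- measurability of the event
    have hEmeas : MeasurableSet {ω | |(1 / (n : ℝ)) * ∑ j ∈ Finset.range n,
        f (x j ω) * g (x j ω) - m| ≤ 6 * s * B} := by
      have hsm : Measurable fun ω => |(1 / (n : ℝ)) * ∑ j ∈ Finset.range n,
          f (x j ω) * g (x j ω) - m| := by
        apply Measurable.abs
        apply Measurable.sub _ measurable_const
        exact (Finset.measurable_sum (Finset.range n) (fun j _ =>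
          (hf.measurable.comp (hxm j)).mul (hg.measurable.comp (hxm j)))).const_mul _
      exact measurableSet_le hsm measurable_const
    -- combine
    have key2 : (P ({ω | |(1 / (n : ℝ)) * ∑ j ∈ Finset.range n,
        f (x j ω) * g (x j ω) - m| ≤ 6 * s * B}ᶜ)).toReal ≤ 2/(n:ℝ)^9 := by
      calc (P _).toReal ≤
          (P ({ω | (n:ℝ)*(6*s*B) ≤ ∑ j ∈ Finset.range n, Z (x j ω)} ∪
            {ω | (n:ℝ)*(6*s*B) ≤ ∑ j ∈ Finset.range n, -(Z (x j ω))})).toReal :=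
            ENNReal.toReal_mono (measure_ne_top _ _) (measure_mono hsub)
      _ ≤ (P {ω | (n:ℝ)*(6*s*B) ≤ ∑ j ∈ Finset.range n, Z (x j ω)} +
            P {ω | (n:ℝ)*(6*s*B) ≤ ∑ j ∈ Finset.range n, -(Z (x j ω))}).toReal :=
            ENNReal.toReal_mono (by finiteness) (measure_union_le _ _)
      _ = (P {ω | (n:ℝ)*(6*s*B) ≤ ∑ j ∈ Finset.range n, Z (x j ω)}).toReal +
            (P {ω | (n:ℝ)*(6*s*B) ≤ ∑ j ∈ Finset.range n, -(Z (x j ω))}).toReal :=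
            ENNReal.toReal_add (measure_ne_top _ _) (measure_ne_top _ _)
      _ ≤ ((n:ℝ)^9)⁻¹ + ((n:ℝ)^9)⁻¹ := add_le_add (tail1.trans hexp) (tail2.trans hexp)
      _ = 2/(n:ℝ)^9 := by rw [← one_div]; ring
    have hsum1 : (P {ω | |(1 / (n : ℝ)) * ∑ j ∈ Finset.range n,
        f (x j ω) * g (x j ω) - m| ≤ 6 * s * B}).toReal +
        (P ({ω | |(1 / (n : ℝ)) * ∑ j ∈ Finset.range n,
        f (x j ω) * g (x j ω) - m| ≤ 6 * s * B}ᶜ)).toReal = 1 := by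
      rw [← ENNReal.toReal_add (measure_ne_top _ _) (measure_ne_top _ _),
        measure_add_measure_compl hEmeas]
      simp
    apply ENNReal.ofReal_le_of_le_toReal
    linarith [key2, hsum1]
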